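/- Let A be an anti-commutative algebra over a field F and let z ∈ A be a CB-element. Then x·(z·y) = -(x·z)·y for all x, y ∈ A. -/
import Mathlib


/-- If `z` is a CB-element of an anti-commutative algebra then
`x·(z·y) = -(x·z)·y` for all `x, y`. -/
theorem stmt_5 (F : Type*) [Field F] (A : Type*) [AddCommGroup A] [Module F A]
    (mul : A →ₗ[F] A →ₗ[F] A)
    (hac : ∀ x : A, mul x x = 0)
    (z : A) (hz : ∀ x y : A, mul x y = 0 → mul (mul x z) y = 0) :
    ∀ x y : A, mul x (mul z y) = - mul (mul x z) y := by
  have hanti : ∀ a b : A, mul a b = - mul b a := by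
    intro a b
    have h := hac (a + b)
    simp only [map_add, LinearMap.add_apply, hac a, hac b, zero_add, add_zero] at h
    linear_combination (norm := abel) h
  intro x y
  have h := hz (x + y) (x + y) (hac _)
  have h1 := hz x x (hac x)
  have h2 := hz y y (hac y)
  simp only [map_add, LinearMap.add_apply, h1, h2, zero_add, add_zero] at h
  -- h : mul (mul x z) y + mul (mul y z) x = 0
  have hyz : mul (mul y z) x = mul x (mul z y) := by
    rw [hanti y z, map_neg, LinearMap.neg_apply, hanti (mul z y) x, neg_neg]
  rw [hyz] at h
  linear_combination (norm := abel) h
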